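/- Let D ≥ 1 be an integer and let χ : ℝ_+^D → ℝ be continuous on ℝ_+^D and twice continuously differentiable on (0,∞)^D. Then χ is ℝ_+^D-convex if and only if for every x ∈ (0,∞)^D, all entries of the Hessian matrix ∇²χ(x) are nonnegative. -/

import Mathlib

open MeasureTheory

/-- The nonnegative orthant `ℝ_+^D` in `ℝ^D`. -/
def orthant (D : ℕ) : Set (EuclideanSpace ℝ (Fin D)) := {x | ∀ i, 0 ≤ x i}

/-- The `(i,j)` entry of the Hessian matrix `∇²χ(x)`, as the second directional derivative
of `χ` at `x` in the coordinate directions `i` and `j`. -/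
noncomputable def hessEntry (D : ℕ) (χ : EuclideanSpace ℝ (Fin D) → ℝ)
    (x : EuclideanSpace ℝ (Fin D)) (i j : Fin D) : ℝ :=
  fderiv ℝ (fun z => fderiv ℝ χ z (EuclideanSpace.single j (1 : ℝ))) x
    (EuclideanSpace.single i (1 : ℝ))

section Aux
open Set

namespace OA
variable {D : ℕ} {χ : EuclideanSpace ℝ (Fin D) → ℝ}

def U (D : ℕ) : Set (EuclideanSpace ℝ (Fin D)) := {x | ∀ i, 0 < x i}

lemma isOpen_U (D : ℕ) : IsOpen (U D) := by
  have : U D = ⋂ i, (fun x : EuclideanSpace ℝ (Fin D) => x i) ⁻¹' Set.Ioi 0 := by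
    ext x; simp [U]
  rw [this]
  exact isOpen_iInter_of_finite fun i =>
    ((PiLp.continuous_apply 2 _ i).isOpen_preimage _ isOpen_Ioi)

lemma contDiffAt (hC2 : ContDiffOn ℝ 2 χ (U D)) {p} (hp : p ∈ U D) :
    ContDiffAt ℝ 2 χ p :=
  hC2.contDiffAt ((isOpen_U D).mem_nhds hp)

lemma diffAt (hC2 : ContDiffOn ℝ 2 χ (U D)) {p} (hp : p ∈ U D) :
    DifferentiableAt ℝ χ p :=
  (contDiffAt hC2 hp).differentiableAt (by norm_num)

lemma diffAt_fderiv (hC2 : ContDiffOn ℝ 2 χ (U D)) {p} (hp : p ∈ U D) :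
    DifferentiableAt ℝ (fderiv ℝ χ) p := by
  have := (contDiffAt hC2 hp).fderiv_right (m := 1) (by norm_num)
  exact this.differentiableAt (by norm_num)

lemma hessEntry_eq {p} (hB : DifferentiableAt ℝ (fderiv ℝ χ) p) (i j : Fin D) :
    hessEntry D χ p i j
      = (fderiv ℝ (fderiv ℝ χ) p (EuclideanSpace.single i (1:ℝ)))
          (EuclideanSpace.single j (1:ℝ)) := by
  have h : HasFDerivAt (fun z => fderiv ℝ χ z (EuclideanSpace.single j (1:ℝ)))
      ((ContinuousLinearMap.apply ℝ ℝ (EuclideanSpace.single j (1:ℝ))).comp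
        (fderiv ℝ (fderiv ℝ χ) p)) p :=
    (ContinuousLinearMap.apply ℝ ℝ (EuclideanSpace.single j (1:ℝ))).hasFDerivAt.comp p
      hB.hasFDerivAt
  rw [hessEntry, h.fderiv]
  rfl

lemma hasDerivAt_line {F : Type*} [NormedAddCommGroup F] [NormedSpace ℝ F]
    {f : EuclideanSpace ℝ (Fin D) → F} {L : EuclideanSpace ℝ (Fin D) →L[ℝ] F} {c v : EuclideanSpace ℝ (Fin D)} {t : ℝ}
    (hf : HasFDerivAt f L (c + t • v)) :
    HasDerivAt (fun s : ℝ => f (c + s • v)) (L v) t := by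
  have hline : HasDerivAt (fun s : ℝ => c + s • v) v t := by
    simpa using ((hasDerivAt_id t).smul_const v).const_add c
  exact (hf.comp_hasDerivAt t hline)

lemma decomp (y : EuclideanSpace ℝ (Fin D)) :
    (∑ i, (y i) • EuclideanSpace.single i (1:ℝ)) = y := by
  ext k; rw [WithLp.ofLp_sum, Finset.sum_apply]; simp [EuclideanSpace.single_apply]

lemma clm2_expand (B : EuclideanSpace ℝ (Fin D) →L[ℝ] EuclideanSpace ℝ (Fin D) →L[ℝ] ℝ)
    (y z : EuclideanSpace ℝ (Fin D)) :
    B y z = ∑ i, ∑ j, y i * z j *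
      B (EuclideanSpace.single i (1:ℝ)) (EuclideanSpace.single j (1:ℝ)) := by
  conv_lhs => rw [← decomp y, ← decomp z]
  simp only [map_sum, _root_.map_smul, ContinuousLinearMap.sum_apply,
    ContinuousLinearMap.smul_apply, smul_eq_mul]
  rw [Finset.sum_comm]
  refine Finset.sum_congr rfl fun i _ => ?_
  rw [Finset.mul_sum]
  exact Finset.sum_congr rfl fun j _ => by ring

lemma grad_mono (hC2 : ContDiffOn ℝ 2 χ (U D))
    (hH : ∀ p ∈ U D, ∀ i j, 0 ≤ hessEntry D χ p i j)
    {a y z : EuclideanSpace ℝ (Fin D)} (ha : a ∈ U D)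
    (hy : ∀ i, 0 ≤ y i) (hz : ∀ i, 0 ≤ z i) :
    fderiv ℝ χ a z ≤ fderiv ℝ χ (a + y) z := by
  have key : ∀ s ∈ Icc (0:ℝ) 1, a + s • y ∈ U D := by
    intro s hs i
    have : (a + s • y) i = a i + s * y i := rfl
    rw [this]
    exact add_pos_of_pos_of_nonneg (ha i) (mul_nonneg hs.1 (hy i))
  set g : ℝ → ℝ := fun s => fderiv ℝ χ (a + s • y) z with hgdef
  have hg : ∀ s ∈ Icc (0:ℝ) 1,
      HasDerivAt g ((fderiv ℝ (fderiv ℝ χ) (a + s • y) y) z) s := by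
    intro s hs
    have hB := diffAt_fderiv hC2 (key s hs)
    have h1 : HasFDerivAt (fun w => fderiv ℝ χ w z)
        ((ContinuousLinearMap.apply ℝ ℝ z).comp (fderiv ℝ (fderiv ℝ χ) (a + s • y))) _ :=
      (ContinuousLinearMap.apply ℝ ℝ z).hasFDerivAt.comp _ hB.hasFDerivAt
    exact hasDerivAt_line h1
  have hnn : ∀ s ∈ Icc (0:ℝ) 1, 0 ≤ (fderiv ℝ (fderiv ℝ χ) (a + s • y) y) z := by
    intro s hs
    rw [clm2_expand]
    refine Finset.sum_nonneg fun i _ => Finset.sum_nonneg fun j _ => ?_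
    have := hH _ (key s hs) i j
    rw [hessEntry_eq (diffAt_fderiv hC2 (key s hs))] at this
    exact mul_nonneg (mul_nonneg (hy i) (hz j)) this
  have hmono : MonotoneOn g (Icc (0:ℝ) 1) := by
    apply monotoneOn_of_deriv_nonneg (convex_Icc 0 1)
    · exact fun s hs => ((hg s hs).continuousAt).continuousWithinAt
    · intro s hs
      rw [interior_Icc] at hs
      exact ((hg s (Ioo_subset_Icc_self hs)).differentiableAt).differentiableWithinAt
    · intro s hs
      rw [interior_Icc] at hs
      rw [(hg s (Ioo_subset_Icc_self hs)).deriv]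
      exact hnn s (Ioo_subset_Icc_self hs)
  have := hmono (left_mem_Icc.2 zero_le_one) (right_mem_Icc.2 zero_le_one) zero_le_one
  simpa [hgdef] using this

lemma interior_ineq (hC2 : ContDiffOn ℝ 2 χ (U D))
    (hH : ∀ p ∈ U D, ∀ i j, 0 ≤ hessEntry D χ p i j)
    {x y z : EuclideanSpace ℝ (Fin D)} (hx : x ∈ U D)
    (hy : ∀ i, 0 ≤ y i) (hz : ∀ i, 0 ≤ z i) :
    χ (x + y) - χ x ≤ χ (x + y + z) - χ (x + z) := by
  have key : ∀ t ∈ Icc (0:ℝ) 1, x + t • z ∈ U D := by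
    intro t ht i
    have : (x + t • z) i = x i + t * z i := rfl
    rw [this]
    exact add_pos_of_pos_of_nonneg (hx i) (mul_nonneg ht.1 (hz i))
  have key' : ∀ t ∈ Icc (0:ℝ) 1, x + y + t • z ∈ U D := by
    intro t ht i
    have : (x + y + t • z) i = x i + y i + t * z i := rfl
    rw [this]
    exact add_pos_of_pos_of_nonneg (add_pos_of_pos_of_nonneg (hx i) (hy i))
      (mul_nonneg ht.1 (hz i))
  set f : ℝ → ℝ := fun t => χ (x + y + t • z) - χ (x + t • z) with hfdef
  have hf : ∀ t ∈ Icc (0:ℝ) 1,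
      HasDerivAt f (fderiv ℝ χ (x + y + t • z) z - fderiv ℝ χ (x + t • z) z) t := by
    intro t ht
    exact (hasDerivAt_line (diffAt hC2 (key' t ht)).hasFDerivAt).sub
      (hasDerivAt_line (diffAt hC2 (key t ht)).hasFDerivAt)
  have hnn : ∀ t ∈ Icc (0:ℝ) 1,
      0 ≤ fderiv ℝ χ (x + y + t • z) z - fderiv ℝ χ (x + t • z) z := by
    intro t ht
    have := grad_mono hC2 hH (key t ht) hy hz
    have heq : x + t • z + y = x + y + t • z := by abel
    rw [heq] at this
    linarith
  have hmono : MonotoneOn f (Icc (0:ℝ) 1) := by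
    apply monotoneOn_of_deriv_nonneg (convex_Icc 0 1)
    · exact fun t ht => ((hf t ht).continuousAt).continuousWithinAt
    · intro t ht
      rw [interior_Icc] at ht
      exact ((hf t (Ioo_subset_Icc_self ht)).differentiableAt).differentiableWithinAt
    · intro t ht
      rw [interior_Icc] at ht
      rw [(hf t (Ioo_subset_Icc_self ht)).deriv]
      exact hnn t (Ioo_subset_Icc_self ht)
  have := hmono (left_mem_Icc.2 zero_le_one) (right_mem_Icc.2 zero_le_one) zero_le_one
  simpa [hfdef] using this

end OA

namespace OA2
open OA
variable {D : ℕ} {χ : EuclideanSpace ℝ (Fin D) → ℝ}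

lemma hess_contAt (hC2 : ContDiffOn ℝ 2 χ (U D)) {x} (hx : x ∈ U D) (i j : Fin D) :
    ContinuousAt (fun p => hessEntry D χ p i j) x := by
  have h1 : ContDiffOn ℝ 1 (fderiv ℝ χ) (U D) :=
    hC2.fderiv_of_isOpen (isOpen_U D) (by norm_num)
  have h2 : ContinuousOn (fderiv ℝ (fderiv ℝ χ)) (U D) :=
    h1.continuousOn_fderiv_of_isOpen (isOpen_U D) le_rfl
  have h3 : ContinuousAt (fderiv ℝ (fderiv ℝ χ)) x :=
    h2.continuousAt ((isOpen_U D).mem_nhds hx)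
  have h4 : ContinuousAt (fun p =>
      (fderiv ℝ (fderiv ℝ χ) p (EuclideanSpace.single i (1:ℝ)))
        (EuclideanSpace.single j (1:ℝ))) x :=
    (((ContinuousLinearMap.apply ℝ ℝ (EuclideanSpace.single j (1:ℝ))).continuous.comp
      ((ContinuousLinearMap.apply ℝ (EuclideanSpace ℝ (Fin D) →L[ℝ] ℝ)
        (EuclideanSpace.single i (1:ℝ))).continuous)).continuousAt).comp h3
  apply h4.congr
  filter_upwards [(isOpen_U D).mem_nhds hx] with p hp
  exact (hessEntry_eq (diffAt_fderiv hC2 hp) i j).symm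

end OA2

namespace OA3
open OA OA2 Set
variable {D : ℕ} {χ : EuclideanSpace ℝ (Fin D) → ℝ}

lemma forward (hC2 : ContDiffOn ℝ 2 χ (U D))
    (hconv : ∀ x, (∀ i, (0:ℝ) ≤ x i) → ∀ y, (∀ i, (0:ℝ) ≤ y i) → ∀ z, (∀ i, (0:ℝ) ≤ z i) →
        χ (x + y) - χ x ≤ χ (x + y + z) - χ (x + z))
    {x : EuclideanSpace ℝ (Fin D)} (hx : x ∈ U D) (i j : Fin D) :
    0 ≤ hessEntry D χ x i j := by
  by_contra hneg
  push_neg at hneg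
  set ei : EuclideanSpace ℝ (Fin D) := EuclideanSpace.single i (1:ℝ) with hei
  set ej : EuclideanSpace ℝ (Fin D) := EuclideanSpace.single j (1:ℝ) with hej
  -- a neighborhood where the hessian entry is negative and we are in U
  have hev : ∀ᶠ p in nhds x, hessEntry D χ p i j < 0 ∧ p ∈ U D := by
    filter_upwards [(hess_contAt hC2 hx i j).eventually_lt continuousAt_const hneg,
      (isOpen_U D).mem_nhds hx] with p h1 h2
    exact ⟨h1, h2⟩
  obtain ⟨ε, hε, hball⟩ := Metric.eventually_nhds_iff.1 hev
  set t : ℝ := ε / 3 with htdef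
  have ht : 0 < t := by positivity
  -- points of the small box are in the good ball
  have hbox : ∀ a b : ℝ, a ∈ Icc 0 t → b ∈ Icc 0 t →
      hessEntry D χ (x + a • ei + b • ej) i j < 0 ∧ (x + a • ei + b • ej) ∈ U D := by
    intro a b ha hb
    apply hball
    have : x + a • ei + b • ej - x = a • ei + b • ej := by abel
    rw [dist_eq_norm, this]
    calc ‖a • ei + b • ej‖ ≤ ‖a • ei‖ + ‖b • ej‖ := norm_add_le _ _
      _ = |a| + |b| := by
          rw [norm_smul, norm_smul, hei, hej, EuclideanSpace.norm_single,
            EuclideanSpace.norm_single]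
          simp
      _ ≤ t + t := by
          rw [abs_of_nonneg ha.1, abs_of_nonneg hb.1]
          exact add_le_add ha.2 hb.2
      _ < ε := by rw [htdef]; linarith
  have hzero : ∀ b : ℝ, x + b • ej = x + (0:ℝ) • ei + b • ej := by
    intro b; simp
  -- membership of t • ei, t • ej in the orthant
  have hsingle_nonneg : ∀ (c : ℝ), 0 ≤ c → ∀ k,
      (0:ℝ) ≤ (c • (EuclideanSpace.single i (1:ℝ)) : EuclideanSpace ℝ (Fin D)) k := by
    intro c hc k
    have : (c • (EuclideanSpace.single i (1:ℝ)) : EuclideanSpace ℝ (Fin D)) k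
        = c * (if k = i then 1 else 0) := by
      rw [PiLp.smul_apply, EuclideanSpace.single_apply, smul_eq_mul]
    rw [this]
    positivity
  -- convexity inequality
  have hΔ : 0 ≤ χ (x + t • ei + t • ej) - χ (x + t • ej) - (χ (x + t • ei) - χ x) := by
    have h1 := hconv x (fun k => (hx k).le) (t • ei)
      (by intro k; exact hsingle_nonneg t ht.le k) (t • ej)
      (by intro k
          have : ((t • (EuclideanSpace.single j (1:ℝ)) : EuclideanSpace ℝ (Fin D))) k
              = t * (if k = j then 1 else 0) := by
            rw [PiLp.smul_apply, EuclideanSpace.single_apply, smul_eq_mul]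
          rw [this]; positivity)
    rw [hei, hej]
    linarith [h1]
  -- first MVT
  set φ : ℝ → ℝ := fun s => χ (x + t • ei + s • ej) - χ (x + s • ej) with hφ
  have hφd : ∀ s ∈ Icc (0:ℝ) t,
      HasDerivAt φ (fderiv ℝ χ (x + t • ei + s • ej) ej - fderiv ℝ χ (x + s • ej) ej) s := by
    intro s hs
    refine (hasDerivAt_line (diffAt hC2 ?_).hasFDerivAt).sub
      (hasDerivAt_line (f := χ) (c := x) (diffAt hC2 ?_).hasFDerivAt)
    · exact (hbox t s (right_mem_Icc.2 ht.le) hs).2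
    · rw [hzero s]; exact (hbox 0 s (left_mem_Icc.2 ht.le) hs).2
  obtain ⟨v, hv, hveq⟩ := exists_hasDerivAt_eq_slope φ _ ht
    (fun s hs => ((hφd s hs).continuousAt).continuousWithinAt)
    (fun s hs => hφd s (Ioo_subset_Icc_self hs))
  have hφ' : 0 ≤ fderiv ℝ χ (x + t • ei + v • ej) ej - fderiv ℝ χ (x + v • ej) ej := by
    rw [hveq]
    apply div_nonneg _ (by linarith)
    simpa [hφ] using hΔ
  -- second MVT
  set ψ : ℝ → ℝ := fun s => fderiv ℝ χ (x + v • ej + s • ei) ej with hψ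
  have hvI : v ∈ Icc (0:ℝ) t := Ioo_subset_Icc_self hv
  have hψd : ∀ s ∈ Icc (0:ℝ) t,
      HasDerivAt ψ ((fderiv ℝ (fderiv ℝ χ) (x + v • ej + s • ei) ei) ej) s := by
    intro s hs
    have hmem : (x + v • ej + s • ei) ∈ U D := by
      have : x + v • ej + s • ei = x + s • ei + v • ej := by abel
      rw [this]; exact (hbox s v hs hvI).2
    have hB := diffAt_fderiv hC2 hmem
    have h1 : HasFDerivAt (fun w => fderiv ℝ χ w ej)
        ((ContinuousLinearMap.apply ℝ ℝ ej).comp (fderiv ℝ (fderiv ℝ χ) (x + v • ej + s • ei)))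
        (x + v • ej + s • ei) :=
      (ContinuousLinearMap.apply ℝ ℝ ej).hasFDerivAt.comp _ hB.hasFDerivAt
    exact hasDerivAt_line h1
  obtain ⟨u, hu, hueq⟩ := exists_hasDerivAt_eq_slope ψ _ ht
    (fun s hs => ((hψd s hs).continuousAt).continuousWithinAt)
    (fun s hs => hψd s (Ioo_subset_Icc_self hs))
  have huI : u ∈ Icc (0:ℝ) t := Ioo_subset_Icc_self hu
  -- the point where the hessian entry is evaluated
  have hmemp : x + v • ej + u • ei = x + u • ei + v • ej := by abel
  have hgood := hbox u v huI hvI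
  have hψnn : 0 ≤ (fderiv ℝ (fderiv ℝ χ) (x + v • ej + u • ei) ei) ej := by
    rw [hueq]
    apply div_nonneg _ (by linarith)
    have e1 : x + v • ej + t • ei = x + t • ei + v • ej := by abel
    have e2 : x + v • ej + (0:ℝ) • ei = x + v • ej := by simp
    simp only [hψ, e1, e2]
    have e3 : x + v • ej = x + v • ej := rfl
    calc (0:ℝ) ≤ fderiv ℝ χ (x + t • ei + v • ej) ej - fderiv ℝ χ (x + v • ej) ej := hφ'
      _ = _ := by ring
  have hhess : hessEntry D χ (x + v • ej + u • ei) i j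
      = (fderiv ℝ (fderiv ℝ χ) (x + v • ej + u • ei) ei) ej := by
    rw [hmemp] at *
    exact hessEntry_eq (diffAt_fderiv hC2 hgood.2) i j
  rw [← hhess] at hψnn
  rw [hmemp] at hψnn
  linarith [hgood.1, hψnn]
end OA3

namespace OA4
open OA Set Filter Topology
variable {D : ℕ} {χ : EuclideanSpace ℝ (Fin D) → ℝ}

noncomputable def ones (D : ℕ) : EuclideanSpace ℝ (Fin D) :=
  (EuclideanSpace.equiv (Fin D) ℝ).symm (fun _ => 1)

lemma ones_apply (D : ℕ) (k : Fin D) : ones D k = 1 := rfl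

lemma backward (hC2 : ContDiffOn ℝ 2 χ (U D))
    (hcont : ContinuousOn χ {x : EuclideanSpace ℝ (Fin D) | ∀ i, 0 ≤ x i})
    (hH : ∀ p ∈ U D, ∀ i j, 0 ≤ hessEntry D χ p i j)
    {x y z : EuclideanSpace ℝ (Fin D)}
    (hx : ∀ i, 0 ≤ x i) (hy : ∀ i, 0 ≤ y i) (hz : ∀ i, 0 ≤ z i) :
    χ (x + y) - χ x ≤ χ (x + y + z) - χ (x + z) := by
  have htend : ∀ w : EuclideanSpace ℝ (Fin D), (∀ i, 0 ≤ w i) →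
      Tendsto (fun ε : ℝ => χ (x + ε • ones D + w)) (𝓝[>] 0) (𝓝 (χ (x + w))) := by
    intro w hw
    have hmemxw : x + w ∈ {x : EuclideanSpace ℝ (Fin D) | ∀ i, 0 ≤ x i} := by
      intro k; exact add_nonneg (hx k) (hw k)
    have hcw := hcont.continuousWithinAt hmemxw
    have hpath : Tendsto (fun ε : ℝ => x + ε • ones D + w) (𝓝[>] 0)
        (𝓝[{x : EuclideanSpace ℝ (Fin D) | ∀ i, 0 ≤ x i}] (x + w)) := by
      rw [tendsto_nhdsWithin_iff]
      constructor
      · have hc : Continuous (fun ε : ℝ => x + ε • ones D + w) := by continuity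
        have := hc.tendsto 0
        simp only [zero_smul, add_zero] at this
        have h0 : x + (0:ℝ) • ones D + w = x + w := by simp
        rw [← h0]
        exact (hc.tendsto 0).mono_left nhdsWithin_le_nhds
      · refine eventually_nhdsWithin_of_forall fun ε hε => ?_
        intro k
        have : (x + ε • ones D + w) k = x k + ε * 1 + w k := rfl
        rw [this]
        have h0ε : (0:ℝ) < ε := hε
        have := hx k; have := hw k
        linarith
    exact hcw.tendsto.comp hpath
  have hF : Tendsto (fun ε : ℝ => χ (x + ε • ones D + y) - χ (x + ε • ones D + 0))
      (𝓝[>] 0) (𝓝 (χ (x + y) - χ (x + 0))) :=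
    (htend y hy).sub (htend 0 (fun k => le_rfl))
  have hG : Tendsto (fun ε : ℝ => χ (x + ε • ones D + (y + z)) - χ (x + ε • ones D + z))
      (𝓝[>] 0) (𝓝 (χ (x + (y + z)) - χ (x + z))) :=
    (htend (y + z) (fun k => add_nonneg (hy k) (hz k))).sub (htend z hz)
  have hle := le_of_tendsto_of_tendsto hF hG (by
    refine eventually_nhdsWithin_of_forall fun ε hε => ?_
    have hεpos : (0:ℝ) < ε := hε
    have hmemU : x + ε • ones D ∈ U D := by
      intro k
      have : (x + ε • ones D) k = x k + ε * 1 := rfl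
      rw [this]
      have := hx k
      linarith
    have := OA.interior_ineq hC2 hH hmemU hy hz
    have e1 : x + ε • ones D + 0 = x + ε • ones D := by simp
    have e2 : x + ε • ones D + y + z = x + ε • ones D + (y + z) := by abel
    show χ (x + ε • ones D + y) - χ (x + ε • ones D + 0) ≤
      χ (x + ε • ones D + (y + z)) - χ (x + ε • ones D + z)
    rw [e1, ← e2]
    exact this)
  have e3 : x + 0 = x := by simp
  have e4 : x + y + z = x + (y + z) := by abel
  rw [e3] at hle
  rw [e4]
  exact hle
end OA4


/-- a function `χ : ℝ_+^D → ℝ`, continuous on `ℝ_+^D` and `C²` on `(0,∞)^D`,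
is `ℝ_+^D`-convex if and only if all entries of its Hessian are nonnegative on `(0,∞)^D`. -/
theorem orthantConvex_iff_hessian_nonneg (D : ℕ) (hD : 1 ≤ D)
    (χ : EuclideanSpace ℝ (Fin D) → ℝ)
    (hcont : ContinuousOn χ (orthant D))
    (hC2 : ContDiffOn ℝ 2 χ {x : EuclideanSpace ℝ (Fin D) | ∀ i, 0 < x i}) :
    (∀ x ∈ orthant D, ∀ y ∈ orthant D, ∀ z ∈ orthant D,
        χ (x + y) - χ x ≤ χ (x + y + z) - χ (x + z)) ↔
      (∀ x : EuclideanSpace ℝ (Fin D), (∀ i, 0 < x i) →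
        ∀ i j : Fin D, 0 ≤ hessEntry D χ x i j) := by
  have hC2' : ContDiffOn ℝ 2 χ (OA.U D) := hC2
  constructor
  · intro hconv x hx i j
    exact OA3.forward hC2' hconv hx i j
  · intro hH x hx y hy z hz
    exact OA4.backward hC2' hcont (fun p hp => hH p hp) hx hy hz

end Aux
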